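/- If a sequence (a_n) of positive reals satisfies a_n ~ C e^{-γn} n^{-3/2} for some constants C > 0 and γ ≥ 0, then a_{n-1}/a_n → e^{γ} and the self-convolution satisfies (Σ_{i=0}^n a_i a_{n-i})/a_n → 2 Σ_{i=0}^∞ a_i e^{γ i} < ∞ as n → ∞; that is, (a_n) belongs to the class Ss(γ). -/

import Mathlib

open Filter Real Finset

private lemma ss_key1 (c : ℕ → ℝ) (C : ℝ) (hC : 0 < C) (hcpos : ∀ n, 0 < c n)
    (hr : Tendsto (fun n : ℕ => c n / (C * (n : ℝ) ^ (-(3 : ℝ) / 2))) atTop (nhds 1))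
    (i : ℕ) : Tendsto (fun n : ℕ => c (n - i) / c n) atTop (nhds 1) := by
  set p : ℝ := -(3 : ℝ) / 2 with hp
  clear_value p
  set r : ℕ → ℝ := fun n => c n / (C * (n : ℝ) ^ p) with hrdef
  have h1 : Tendsto (fun n : ℕ => r (n - i)) atTop (nhds 1) := hr.comp (tendsto_sub_atTop_nat i)
  have h2 : Tendsto (fun n : ℕ => 1 - (i : ℝ) / n) atTop (nhds 1) := by
    have := (tendsto_const_div_atTop_nhds_zero_nat (i : ℝ)).const_sub 1
    simpa using this
  have h3 : Tendsto (fun n : ℕ => (1 - (i : ℝ) / n) ^ p) atTop (nhds 1) := by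
    have := h2.rpow_const (p := p) (Or.inl one_ne_zero)
    simpa using this
  have hlim : Tendsto (fun n : ℕ => (r (n - i) / r n) * ((1 - (i : ℝ) / n) ^ p)) atTop
      (nhds 1) := by
    have := (h1.div hr one_ne_zero).mul h3
    simpa using this
  apply hlim.congr'
  filter_upwards [eventually_ge_atTop (i + 1)] with n hn
  have hni : i ≤ n := by omega
  have hn1 : 1 ≤ n := by omega
  have hcast : ((n - i : ℕ) : ℝ) = (n : ℝ) - i := Nat.cast_sub hni
  have hnpos : (0 : ℝ) < n := by exact_mod_cast hn1
  have hnipos : (0 : ℝ) < (n : ℝ) - i := by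
    have : (i : ℝ) + 1 ≤ n := by exact_mod_cast hn
    linarith
  have he : (1 - (i : ℝ) / n) = ((n : ℝ) - i) / n := by field_simp
  rw [he, Real.div_rpow hnipos.le hnpos.le]
  have hrpn : (0:ℝ) < (n : ℝ) ^ p := Real.rpow_pos_of_pos hnpos p
  have hrpni : (0:ℝ) < ((n : ℝ) - i) ^ p := Real.rpow_pos_of_pos hnipos p
  have hcn : c n ≠ 0 := (hcpos n).ne'
  have hcni : c (n - i) ≠ 0 := (hcpos _).ne'
  simp only [hrdef, hcast]
  field_simp

private lemma ss_key3 (c : ℕ → ℝ) (C : ℝ) (hC : 0 < C) (hcpos : ∀ n, 0 < c n)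
    (hr : Tendsto (fun n : ℕ => c n / (C * (n : ℝ) ^ (-(3 : ℝ) / 2))) atTop (nhds 1)) :
    ∃ N : ℕ, ∀ n ≥ N, ∀ i ≤ n / 2, c (n - i) / c n ≤ 9 := by
  set p : ℝ := -(3 : ℝ) / 2 with hp
  clear_value p
  have hev : ∀ᶠ n : ℕ in atTop,
      1 / 2 ≤ c n / (C * (n : ℝ) ^ p) ∧ c n / (C * (n : ℝ) ^ p) ≤ 3 / 2 := by
    filter_upwards [hr.eventually (eventually_ge_nhds (by norm_num : (1:ℝ)/2 < 1)),
      hr.eventually (eventually_le_nhds (by norm_num : (1:ℝ) < 3/2))] with n h1 h2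
    exact ⟨h1, h2⟩
  obtain ⟨N0, hN0⟩ := hev.exists_forall_of_atTop
  refine ⟨2 * N0 + 2, fun n hn i hi => ?_⟩
  have hiN : N0 ≤ n - i := by omega
  have hnN : N0 ≤ n := by omega
  have hn1 : 1 ≤ n := by omega
  have hni1 : 1 ≤ n - i := by omega
  have hnpos : (0 : ℝ) < n := by exact_mod_cast hn1
  have hcast : ((n - i : ℕ) : ℝ) = (n : ℝ) - i := Nat.cast_sub (by omega)
  have hnipos : (0 : ℝ) < (n : ℝ) - i := by
    rw [← hcast]; exact_mod_cast hni1
  have hbn : (0:ℝ) < C * (n : ℝ) ^ p := mul_pos hC (Real.rpow_pos_of_pos hnpos p)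
  have hbni : (0:ℝ) < C * ((n : ℝ) - i) ^ p :=
    mul_pos hC (Real.rpow_pos_of_pos hnipos p)
  have h1 := (hN0 n hnN).1
  have h2 := (hN0 (n - i) hiN).2
  rw [hcast] at h2
  have hcnlb : 1 / 2 * (C * (n : ℝ) ^ p) ≤ c n := (le_div_iff₀ hbn).1 h1
  have hcniub : c (n - i) ≤ 3 / 2 * (C * ((n : ℝ) - i) ^ p) := by
    rw [div_le_iff₀ hbni] at h2
    linarith [h2]
  have hhalf : (n : ℝ) / 2 ≤ (n : ℝ) - i := by
    have : 2 * i ≤ n := by omega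
    have : (2 : ℝ) * i ≤ n := by exact_mod_cast this
    linarith
  have hs1 : ((n : ℝ) - i) ^ p ≤ ((n : ℝ) / 2) ^ p :=
    Real.rpow_le_rpow_of_nonpos (by positivity) hhalf (by norm_num [hp])
  have h232 : (2 : ℝ) ^ ((3:ℝ)/2) ≤ 3 := by
    have hx : ((2:ℝ) ^ ((3:ℝ)/2)) ^ (2:ℕ) = 8 := by
      rw [← Real.rpow_natCast ((2:ℝ) ^ ((3:ℝ)/2)) 2, ← Real.rpow_mul (by norm_num)]
      norm_num
    nlinarith [Real.rpow_nonneg (by norm_num : (0:ℝ) ≤ 2) ((3:ℝ)/2)]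
  have hs2 : ((n : ℝ) / 2) ^ p = (n : ℝ) ^ p * 2 ^ ((3:ℝ)/2) := by
    rw [Real.div_rpow hnpos.le (by norm_num)]
    rw [show p = -((3:ℝ)/2) by rw [hp]; ring, Real.rpow_neg (by norm_num : (0:ℝ) ≤ 2)]
    field_simp
  have hnp : (0:ℝ) < (n : ℝ) ^ p := Real.rpow_pos_of_pos hnpos p
  have hs3 : ((n : ℝ) - i) ^ p ≤ 3 * (n : ℝ) ^ p := by
    calc ((n : ℝ) - i) ^ p ≤ ((n : ℝ) / 2) ^ p := hs1
      _ = (n : ℝ) ^ p * 2 ^ ((3:ℝ)/2) := hs2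
      _ ≤ (n : ℝ) ^ p * 3 := mul_le_mul_of_nonneg_left h232 hnp.le
      _ = 3 * (n : ℝ) ^ p := by ring
  rw [div_le_iff₀ (hcpos n)]
  have hkey : C * (((n : ℝ) - i) ^ p) ≤ 3 * (C * (n : ℝ) ^ p) := by
    calc C * (((n : ℝ) - i) ^ p) ≤ C * (3 * (n : ℝ) ^ p) :=
          mul_le_mul_of_nonneg_left hs3 hC.le
      _ = 3 * (C * (n : ℝ) ^ p) := by ring
  calc c (n - i) ≤ 3 / 2 * (C * (((n : ℝ) - i) ^ p)) := hcniub
    _ ≤ 3 / 2 * (3 * (C * (n : ℝ) ^ p)) := by linarith [hkey]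
    _ = 9 * (1 / 2 * (C * (n : ℝ) ^ p)) := by ring
    _ ≤ 9 * c n := by linarith [hcnlb]

private lemma ss_lemA (c : ℕ → ℝ) (C : ℝ) (hC : 0 < C) (hcpos : ∀ n, 0 < c n)
    (hr : Tendsto (fun n : ℕ => c n / (C * (n : ℝ) ^ (-(3 : ℝ) / 2))) atTop (nhds 1))
    (hsum : Summable c) (k : ℕ → ℕ) (hk2 : ∀ n, k n ≤ n / 2) (hki : Tendsto k atTop atTop) :
    Tendsto (fun n : ℕ => ∑ i ∈ Finset.range (k n + 1), c i * c (n - i) / c n)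
      atTop (nhds (∑' i, c i)) := by
  set f : ℕ → ℕ → ℝ := fun n i => if i ∈ Finset.range (k n + 1) then c i * c (n - i) / c n else 0
    with hf
  have htsum : ∀ n, ∑' i, f n i = ∑ i ∈ Finset.range (k n + 1), c i * c (n - i) / c n := by
    intro n
    rw [tsum_eq_sum (s := Finset.range (k n + 1)) (fun b hb => if_neg hb)]
    exact Finset.sum_congr rfl fun b hb => if_pos hb
  have hpt : ∀ i : ℕ, Tendsto (fun n => f n i) atTop (nhds (c i)) := by
    intro i
    have h1 : Tendsto (fun n : ℕ => c i * (c (n - i) / c n)) atTop (nhds (c i)) := by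
      have := (ss_key1 c C hC hcpos hr i).const_mul (c i)
      simpa using this
    apply h1.congr'
    filter_upwards [hki.eventually_ge_atTop i] with n hn
    have : i ∈ Finset.range (k n + 1) := Finset.mem_range.2 (by omega)
    simp [hf, Finset.mem_range, Nat.lt_succ_iff, hn, mul_div_assoc]
  have hbound : ∀ᶠ n in atTop, ∀ i, ‖f n i‖ ≤ 9 * c i := by
    obtain ⟨N, hN⟩ := ss_key3 c C hC hcpos hr
    filter_upwards [eventually_ge_atTop N] with n hn i
    by_cases hi : i ∈ Finset.range (k n + 1)
    · have hik : i ≤ k n := by simpa using Nat.lt_succ_iff.mp (Finset.mem_range.mp hi)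
      have hratio : c (n - i) / c n ≤ 9 := hN n hn i (le_trans hik (hk2 n))
      have hpos' : 0 < c i * c (n - i) / c n :=
        div_pos (mul_pos (hcpos i) (hcpos _)) (hcpos n)
      rw [hf]
      simp only [if_pos hi]
      rw [Real.norm_eq_abs, abs_of_pos hpos', mul_div_assoc]
      calc c i * (c (n - i) / c n) ≤ c i * 9 := mul_le_mul_of_nonneg_left hratio (hcpos i).le
        _ = 9 * c i := mul_comm _ _
    · rw [hf]; simp only [if_neg hi, norm_zero]
      have := (hcpos i).le; linarith
  have := tendsto_tsum_of_dominated_convergence (hsum.mul_left 9) hpt hbound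
  exact (this.congr htsum)

private lemma ss_split_sum (c : ℕ → ℝ) (n : ℕ) (hn : 1 ≤ n) :
    ∑ i ∈ Finset.range (n + 1), c i * c (n - i) =
      (∑ i ∈ Finset.range (n / 2 + 1), c i * c (n - i)) +
      ∑ i ∈ Finset.range ((n - n / 2 - 1) + 1), c i * c (n - i) := by
  set m := n / 2 with hm
  set g : ℕ → ℝ := fun i => c i * c (n - i) with hg
  have e1 : n + 1 - (n - m) = m + 1 := by omega
  have hrefl : ∑ j ∈ Finset.range (n - m), g (n - j) =
      ∑ i ∈ Finset.Ico (m + 1) (n + 1), g i := by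
    rw [Finset.range_eq_Ico, Finset.sum_Ico_reflect g 0 (by omega : n - m ≤ n + 1), e1,
      Nat.sub_zero]
  have hsymm : ∀ j ∈ Finset.range (n - m), g (n - j) = g j := by
    intro j hj
    have hj' : j < n - m := Finset.mem_range.mp hj
    simp only [hg]
    rw [show n - (n - j) = j by omega, mul_comm]
  have hk : (n - m - 1) + 1 = n - m := by omega
  calc ∑ i ∈ Finset.range (n + 1), g i
      = ∑ i ∈ Finset.Ico 0 (m + 1), g i + ∑ i ∈ Finset.Ico (m + 1) (n + 1), g i := by
        rw [Finset.sum_Ico_consecutive g (by omega) (by omega), ← Finset.range_eq_Ico]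
    _ = ∑ i ∈ Finset.range (m + 1), g i + ∑ j ∈ Finset.range (n - m), g j := by
        rw [← hrefl, ← Finset.range_eq_Ico, Finset.sum_congr rfl hsymm]
    _ = ∑ i ∈ Finset.range (m + 1), g i + ∑ j ∈ Finset.range ((n - m - 1) + 1), g j := by
        rw [hk]

private lemma ss_summable (c : ℕ → ℝ) (C : ℝ) (hC : 0 < C) (hcpos : ∀ n, 0 < c n)
    (hr : Tendsto (fun n : ℕ => c n / (C * (n : ℝ) ^ (-(3 : ℝ) / 2))) atTop (nhds 1)) :
    Summable c := by
  have hs : Summable (fun n : ℕ => (n : ℝ) ^ (-(3 : ℝ) / 2)) :=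
    Real.summable_nat_rpow.mpr (by norm_num)
  have hev : ∀ᶠ n : ℕ in atTop, c n ≤ 3 / 2 * (C * (n : ℝ) ^ (-(3 : ℝ) / 2)) := by
    filter_upwards [hr.eventually (eventually_le_nhds (by norm_num : (1:ℝ) < 3/2)),
      eventually_ge_atTop 1] with n h1 h2
    have hnpos : (0 : ℝ) < n := by exact_mod_cast h2
    have hbn : (0:ℝ) < C * (n : ℝ) ^ (-(3 : ℝ) / 2) :=
      mul_pos hC (Real.rpow_pos_of_pos hnpos _)
    rw [div_le_iff₀ hbn] at h1
    linarith
  obtain ⟨N, hN⟩ := hev.exists_forall_of_atTop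
  refine (summable_nat_add_iff N).1 ?_
  refine Summable.of_nonneg_of_le (fun n => (hcpos _).le) (fun n => hN (n + N) (by omega)) ?_
  exact (summable_nat_add_iff N).2 ((hs.mul_left C).mul_left (3/2))

/-- If a sequence of positive reals satisfies `a n ~ C e^{-γ n} n^{-3/2}`
with `C > 0`, `γ ≥ 0`, then `a (n-1) / a n → e^γ`, the series `Σ a i e^{γ i}` converges,
and the self-convolution satisfies `(Σ_{i≤n} a i a (n-i)) / a n → 2 Σ_{i} a i e^{γ i}`,
i.e. `a` belongs to the class `Ss(γ)`. -/
theorem stmt0 (a : ℕ → ℝ) (C γ : ℝ) (hC : 0 < C) (hγ : 0 ≤ γ)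
    (hpos : ∀ n, 0 < a n)
    (hasymp : Tendsto
      (fun n : ℕ => a n / (C * Real.exp (-γ * n) * (n : ℝ) ^ (-(3 : ℝ) / 2)))
      atTop (nhds 1)) :
    Tendsto (fun n : ℕ => a (n - 1) / a n) atTop (nhds (Real.exp γ)) ∧
    Summable (fun i : ℕ => a i * Real.exp (γ * i)) ∧
    Tendsto
      (fun n : ℕ => (∑ i ∈ Finset.range (n + 1), a i * a (n - i)) / a n)
      atTop (nhds (2 * ∑' i : ℕ, a i * Real.exp (γ * i))) := by
  set c : ℕ → ℝ := fun i => a i * Real.exp (γ * i) with hc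
  have hcpos : ∀ n, 0 < c n := fun n => mul_pos (hpos n) (Real.exp_pos _)
  have hform : ∀ n : ℕ, a n / (C * Real.exp (-γ * n) * (n : ℝ) ^ (-(3 : ℝ) / 2)) =
      c n / (C * (n : ℝ) ^ (-(3 : ℝ) / 2)) := by
    intro n
    have h1 : C * Real.exp (-γ * n) * (n : ℝ) ^ (-(3 : ℝ) / 2) =
        (C * (n : ℝ) ^ (-(3 : ℝ) / 2)) / Real.exp (γ * n) := by
      rw [show -γ * (n:ℝ) = -(γ * n) by ring, Real.exp_neg]
      ring
    rw [h1, div_div_eq_mul_div]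
  have hr : Tendsto (fun n : ℕ => c n / (C * (n : ℝ) ^ (-(3 : ℝ) / 2))) atTop (nhds 1) :=
    hasymp.congr hform
  have hsum : Summable c := ss_summable c C hC hcpos hr
  refine ⟨?_, hsum, ?_⟩
  · -- ratio limit
    have h1 := (ss_key1 c C hC hcpos hr 1).mul_const (Real.exp γ)
    rw [one_mul] at h1
    apply h1.congr'
    filter_upwards [eventually_ge_atTop 1] with n hn
    have hcast : ((n - 1 : ℕ) : ℝ) = (n : ℝ) - 1 := by simp [Nat.cast_sub hn]
    have hee : Real.exp (γ * ((n : ℝ) - 1)) * Real.exp γ = Real.exp (γ * n) := by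
      rw [← Real.exp_add]
      congr 1
      ring
    show c (n - 1) / c n * Real.exp γ = a (n - 1) / a n
    simp only [hc]
    rw [hcast]
    calc a (n - 1) * Real.exp (γ * ((n : ℝ) - 1)) / (a n * Real.exp (γ * n)) * Real.exp γ
        = a (n - 1) * (Real.exp (γ * ((n : ℝ) - 1)) * Real.exp γ) /
            (a n * Real.exp (γ * n)) := by ring
      _ = a (n - 1) * Real.exp (γ * n) / (a n * Real.exp (γ * n)) := by rw [hee]
      _ = a (n - 1) / a n := mul_div_mul_right _ _ (Real.exp_ne_zero _)
  · -- convolution limit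
    have htop1 : Tendsto (fun n : ℕ => n / 2) atTop atTop :=
      tendsto_atTop_atTop.2 fun b => ⟨2 * b, fun n hn => by omega⟩
    have htop2 : Tendsto (fun n : ℕ => n - n / 2 - 1) atTop atTop :=
      tendsto_atTop_atTop.2 fun b => ⟨2 * b + 2, fun n hn => by omega⟩
    have hA1 := ss_lemA c C hC hcpos hr hsum (fun n => n / 2) (fun n => le_refl _) htop1
    have hA2 := ss_lemA c C hC hcpos hr hsum (fun n => n - n / 2 - 1) (fun n => by show n - n / 2 - 1 ≤ n / 2; omega) htop2
    have hadd := hA1.add hA2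
    rw [two_mul]
    apply hadd.congr'
    filter_upwards [eventually_ge_atTop 1] with n hn
    have e : ∑ i ∈ Finset.range (n + 1), c i * c (n - i) / c n =
        (∑ i ∈ Finset.range (n + 1), a i * a (n - i)) / a n := by
      rw [← Finset.sum_div]
      have h1 : ∑ i ∈ Finset.range (n + 1), c i * c (n - i) =
          (∑ i ∈ Finset.range (n + 1), a i * a (n - i)) * Real.exp (γ * n) := by
        rw [Finset.sum_mul]
        refine Finset.sum_congr rfl fun i hi => ?_
        have hi' : i ≤ n := Nat.lt_succ_iff.mp (Finset.mem_range.mp hi)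
        have hcast : ((n - i : ℕ) : ℝ) = (n : ℝ) - i := Nat.cast_sub hi'
        simp only [hc]
        rw [hcast]
        calc a i * Real.exp (γ * i) * (a (n - i) * Real.exp (γ * ((n : ℝ) - i)))
            = a i * a (n - i) * (Real.exp (γ * i) * Real.exp (γ * ((n : ℝ) - i))) := by ring
          _ = a i * a (n - i) * Real.exp (γ * n) := by
              rw [← Real.exp_add, show γ * (i:ℝ) + γ * ((n:ℝ) - i) = γ * n by ring]
      rw [h1, show c n = a n * Real.exp (γ * n) from rfl]
      exact mul_div_mul_right _ _ (Real.exp_ne_zero _)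
    have esplit : ∑ i ∈ Finset.range (n + 1), c i * c (n - i) / c n =
        (∑ i ∈ Finset.range (n / 2 + 1), c i * c (n - i) / c n) +
        ∑ i ∈ Finset.range ((n - n / 2 - 1) + 1), c i * c (n - i) / c n := by
      rw [← Finset.sum_div, ← Finset.sum_div, ← Finset.sum_div, ss_split_sum c n hn, add_div]
    exact esplit.symm.trans e
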